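/- There exists a constant C > 0 depending only on β and c_ψ such that for every j ∈ ℕ, every α ∈ ℝ, and every finite set m ⊆ ℤ, the function g = α Σ_{k∈m} ψ_{jk} satisfies ∫_ℝ |g^*(ξ)|² (1 + ξ²)^β dξ ≤ C α² 2^{2jβ} |m|, for any fixed β > 0. -/

import Mathlib

open MeasureTheory Real

lemma aux_integrable (ψ : ℝ → ℝ) (hψ : Integrable ψ) (ξ : ℝ) :
    Integrable (fun x : ℝ => Complex.exp (Complex.I * x * ξ) * (ψ x : ℂ)) := by
  refine Integrable.bdd_mul (c := 1) hψ.ofReal ?_ (ae_of_all _ fun x => ?_)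
  · exact (Complex.continuous_exp.comp (by continuity)).aestronglyMeasurable
  · simp [Complex.norm_exp]

lemma aux_affine_integrable (ψ : ℝ → ℝ) (hψ : Integrable ψ) (c : ℝ) (hc : c ≠ 0) (k : ℝ) :
    Integrable (fun x : ℝ => ψ (c * x - k)) :=
  (integrable_comp_mul_left_iff (fun y : ℝ => ψ (y - k)) hc).mpr (hψ.comp_sub_right k)

lemma ft_affine (ψ : ℝ → ℝ) (c : ℝ) (hc : 0 < c) (k ξ : ℝ) :
    (∫ x : ℝ, Complex.exp (Complex.I * x * ξ) * (ψ (c * x - k) : ℂ))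
      = ((c : ℝ) : ℂ)⁻¹ * Complex.exp (Complex.I * k * ((ξ / c : ℝ) : ℂ)) *
          ∫ x : ℝ, Complex.exp (Complex.I * x * ((ξ / c : ℝ) : ℂ)) * (ψ x : ℂ) := by
  have hc0 : c ≠ 0 := hc.ne'
  have hcC : (c : ℂ) ≠ 0 := by exact_mod_cast hc0
  set H : ℝ → ℂ := fun y => Complex.exp (Complex.I * ((y : ℂ)/(c : ℂ)) * ξ) * (ψ (y - k) : ℂ) with hH
  have h1 : (fun x : ℝ => Complex.exp (Complex.I * x * ξ) * (ψ (c * x - k) : ℂ))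
      = fun x => H (c * x) := by
    funext x
    simp only [hH]
    push_cast
    rw [mul_div_cancel_left₀ _ hcC]
  rw [h1, MeasureTheory.Measure.integral_comp_mul_left H c]
  have h2 : ∫ y : ℝ, H y
      = Complex.exp (Complex.I * k * ((ξ / c : ℝ) : ℂ)) *
        ∫ x : ℝ, Complex.exp (Complex.I * x * ((ξ / c : ℝ) : ℂ)) * (ψ x : ℂ) := by
    have h3 : ∀ y : ℝ, H y = Complex.exp (Complex.I * k * ((ξ / c : ℝ) : ℂ)) *
        (Complex.exp (Complex.I * ((y - k : ℝ) : ℂ) * ((ξ / c : ℝ) : ℂ)) * (ψ (y - k) : ℂ)) := by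
      intro y
      simp only [hH, ← mul_assoc, ← Complex.exp_add]
      congr 2
      push_cast
      field_simp
      ring
    simp only [h3]
    rw [MeasureTheory.integral_const_mul]
    congr 1
    exact integral_sub_right_eq_self
      (fun x : ℝ => Complex.exp (Complex.I * x * ((ξ / c : ℝ) : ℂ)) * (ψ x : ℂ)) (k : ℝ)
  rw [h2, abs_of_pos (by positivity : (0:ℝ) < c⁻¹), Complex.real_smul]
  push_cast
  ring

lemma ft_sum (ψ : ℝ → ℝ) (hψ : Integrable ψ) (j : ℕ) (α : ℝ) (m : Finset ℤ) (ξ : ℝ) :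
    (∫ x : ℝ, Complex.exp (Complex.I * x * ξ) *
        ((α * ∑ k ∈ m, (2 : ℝ) ^ ((j : ℝ) / 2) * ψ (2 ^ j * x - k) : ℝ) : ℂ))
      = ((α * (2:ℝ) ^ ((j:ℝ)/2) * ((2:ℝ)^j)⁻¹ : ℝ) : ℂ) *
          (∑ k ∈ m, Complex.exp (Complex.I * (k : ℤ) * ((ξ / (2:ℝ)^j : ℝ) : ℂ))) *
          ∫ x : ℝ, Complex.exp (Complex.I * x * ((ξ / (2:ℝ)^j : ℝ) : ℂ)) * (ψ x : ℂ) := by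
  set c : ℝ := (2:ℝ)^j with hcdef
  have hc : (0:ℝ) < c := by positivity
  have hrw : (fun x : ℝ => Complex.exp (Complex.I * x * ξ) *
        ((α * ∑ k ∈ m, (2 : ℝ) ^ ((j : ℝ) / 2) * ψ (2 ^ j * x - k) : ℝ) : ℂ))
      = fun x : ℝ => ∑ k ∈ m, ((α * (2:ℝ) ^ ((j:ℝ)/2) : ℝ) : ℂ) *
          (Complex.exp (Complex.I * x * ξ) * ((ψ (c * x - (k:ℝ)) : ℝ) : ℂ)) := by
    funext x
    push_cast
    rw [Finset.mul_sum, Finset.mul_sum]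
    apply Finset.sum_congr rfl
    intro k _
    ring
  rw [hrw, integral_finset_sum m (fun k _ => Integrable.const_mul
      (aux_integrable (fun y => ψ (c * y - (k:ℝ)))
        (aux_affine_integrable ψ hψ c hc.ne' _) ξ) _)]
  simp only [MeasureTheory.integral_const_mul, ft_affine ψ c hc]
  rw [show ∀ z w : ℂ, (∑ k ∈ m, z * (w * Complex.exp (Complex.I * (k:ℝ) * ((ξ / c : ℝ) : ℂ)) *
      ∫ x : ℝ, Complex.exp (Complex.I * x * ((ξ / c : ℝ) : ℂ)) * (ψ x : ℂ))) =
      (z * w * ∑ k ∈ m, Complex.exp (Complex.I * (k:ℝ) * ((ξ / c : ℝ) : ℂ))) *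
      ∫ x : ℝ, Complex.exp (Complex.I * x * ((ξ / c : ℝ) : ℂ)) * (ψ x : ℂ) from fun z w => by
    rw [Finset.mul_sum, Finset.sum_mul]; apply Finset.sum_congr rfl; intro k _; ring]
  push_cast
  ring

lemma normsq_S (m : Finset ℤ) (η : ℝ) :
    ‖∑ k ∈ m, Complex.exp (Complex.I * (k : ℂ) * (η : ℂ))‖^2
      = ∑ k ∈ m, ∑ l ∈ m, Real.cos (((k - l : ℤ) : ℝ) * η) := by
  have h0 : (‖∑ k ∈ m, Complex.exp (Complex.I * (k : ℂ) * (η : ℂ))‖:ℝ)^2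
      = ((∑ k ∈ m, Complex.exp (Complex.I * (k : ℂ) * (η : ℂ))) *
        (starRingEnd ℂ) (∑ k ∈ m, Complex.exp (Complex.I * (k : ℂ) * (η : ℂ)))).re := by
    rw [Complex.mul_conj, Complex.ofReal_re, Complex.sq_norm]
  rw [h0, map_sum, Finset.sum_mul_sum]
  rw [show ∀ z : ℂ, z.re = z.re from fun _ => rfl]
  rw [Complex.re_sum]
  apply Finset.sum_congr rfl
  intro k _
  rw [Complex.re_sum]
  apply Finset.sum_congr rfl
  intro l _
  have : Complex.exp (Complex.I * (k : ℂ) * (η : ℂ)) *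
      (starRingEnd ℂ) (Complex.exp (Complex.I * (l : ℂ) * (η : ℂ)))
      = Complex.exp ((((k - l : ℤ) : ℝ) * η : ℝ) * Complex.I) := by
    rw [← Complex.exp_conj, ← Complex.exp_add]
    congr 1
    simp only [map_mul, Complex.conj_I, Complex.conj_ofReal, map_intCast]
    push_cast
    ring
  rw [this, Complex.exp_ofReal_mul_I_re]

lemma int_cos (n : ℤ) :
    ∫ η in (-(3*π))..(3*π), Real.cos ((n:ℝ) * η) = if n = 0 then 6*π else 0 := by
  by_cases hn : n = 0
  · simp only [hn, if_pos, Int.cast_zero, zero_mul, Real.cos_zero]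
    rw [intervalIntegral.integral_const]
    simp [smul_eq_mul]
    ring
  · rw [if_neg hn]
    have hn' : (n:ℝ) ≠ 0 := Int.cast_ne_zero.mpr hn
    rw [intervalIntegral.integral_comp_mul_left (f := Real.cos) hn', integral_cos]
    have h1 : Real.sin ((n:ℝ) * (3*π)) = 0 := by
      rw [show (n:ℝ) * (3*π) = ((3*n : ℤ) : ℝ) * π by push_cast; ring]
      exact Real.sin_int_mul_pi _
    rw [show (n:ℝ) * -(3*π) = -((n:ℝ) * (3*π)) by ring, Real.sin_neg, h1]
    simp

lemma int_S (m : Finset ℤ) :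
    (∫ η in (-(3*π))..(3*π), ‖∑ k ∈ m, Complex.exp (Complex.I * (k : ℂ) * (η : ℂ))‖^2)
      = 6*π*m.card := by
  simp only [normsq_S]
  rw [intervalIntegral.integral_finset_sum (fun k _ => (Continuous.intervalIntegrable (by
    continuity) _ _))]
  have : ∀ k ∈ m, (∫ η in (-(3*π))..(3*π), ∑ l ∈ m, Real.cos (((k - l : ℤ) : ℝ) * η))
      = ∑ l ∈ m, if k - l = 0 then 6*π else 0 := by
    intro k _
    rw [intervalIntegral.integral_finset_sum (fun l _ => (Continuous.intervalIntegrable (by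
      continuity) _ _))]
    exact Finset.sum_congr rfl fun l _ => int_cos (k - l)
  rw [Finset.sum_congr rfl this]
  simp only [sub_eq_zero]
  rw [Finset.sum_congr rfl (fun k hk => Finset.sum_ite_eq m k (fun _ => 6*π))]
  rw [Finset.sum_congr rfl (fun k hk => if_pos hk), Finset.sum_const]
  push_cast
  ring

lemma main_bound (β cψ : ℝ) (hβ : 0 < β) (hcψ : 0 < cψ) (c A : ℝ) (hc : 0 < c)
    (S Ψ : ℝ → ℂ) (hScont : Continuous S) (hΨbdd : ∀ η : ℝ, ‖Ψ η‖ ≤ cψ)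
    (hΨsupp : ∀ η : ℝ,
      η ∉ Set.Icc (-(8 * π / 3)) (-(2 * π / 3)) ∪ Set.Icc (2 * π / 3) (8 * π / 3) → Ψ η = 0)
    (V : ℝ) (hV : 0 ≤ V) (hSint : (∫ η in (-(3*π))..(3*π), ‖S η‖^2) = V) :
    (∫ ξ : ℝ, ‖(A : ℂ) * S (ξ / c) * Ψ (ξ / c)‖^2 * (1+ξ^2)^β)
      ≤ (1+(3*π*c)^2)^β * (A^2 * cψ^2) * (c * V) := by
  have hπ := Real.pi_gt_three
  set L : ℝ := 3*π*c with hLdef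
  have hL : 0 < L := by positivity
  set h : ℝ → ℝ :=
    Set.indicator (Set.Icc (-L) L) (fun ξ => (1+L^2)^β * (A^2 * cψ^2) * ‖S (ξ/c)‖^2) with hhdef
  have hIcont : Continuous (fun ξ : ℝ => (1+L^2)^β * (A^2 * cψ^2) * ‖S (ξ/c)‖^2) :=
    continuous_const.mul ((hScont.comp (continuous_id.div_const c)).norm.pow 2)
  have hInt : Integrable h :=
    (hIcont.integrableOn_Icc).integrable_indicator measurableSet_Icc
  have hbound : ∀ ξ : ℝ, ‖(A : ℂ) * S (ξ / c) * Ψ (ξ / c)‖^2 * (1+ξ^2)^β ≤ h ξ := by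
    intro ξ
    by_cases hmemIcc : ξ ∈ Set.Icc (-L) L
    · rw [hhdef, Set.indicator_of_mem hmemIcc]
      have e1 : ‖(A : ℂ) * S (ξ / c) * Ψ (ξ / c)‖^2
          = A^2 * (‖S (ξ/c)‖^2 * ‖Ψ (ξ/c)‖^2) := by
        rw [norm_mul, norm_mul, Complex.norm_real, Real.norm_eq_abs, mul_pow, mul_pow, sq_abs]
        ring
      have b1 : ‖Ψ (ξ/c)‖^2 ≤ cψ^2 := by
        have := hΨbdd (ξ/c)
        nlinarith [norm_nonneg (Ψ (ξ/c))]
      have b2 : (1+ξ^2)^β ≤ (1+L^2)^β := by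
        apply Real.rpow_le_rpow (by positivity) _ hβ.le
        obtain ⟨h1, h2⟩ := hmemIcc
        nlinarith [sq_le_sq' h1 h2]
      calc ‖(A : ℂ) * S (ξ / c) * Ψ (ξ / c)‖^2 * (1+ξ^2)^β
          ≤ (A^2 * (‖S (ξ/c)‖^2 * cψ^2)) * (1+L^2)^β := by
            rw [e1]
            apply mul_le_mul _ b2 (by positivity) (by positivity)
            exact mul_le_mul_of_nonneg_left
              (mul_le_mul_of_nonneg_left b1 (by positivity)) (by positivity)
        _ = (1+L^2)^β * (A^2 * cψ^2) * ‖S (ξ/c)‖^2 := by ring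
    · rw [hhdef, Set.indicator_of_notMem hmemIcc]
      have hΨ0 : Ψ (ξ/c) = 0 := by
        apply hΨsupp
        intro hmemU
        apply hmemIcc
        rcases hmemU with hm1 | hm1 <;> obtain ⟨ha, hb⟩ := hm1
        · rw [le_div_iff₀ hc] at ha
          rw [div_le_iff₀ hc] at hb
          exact ⟨by rw [hLdef]; nlinarith, by rw [hLdef]; nlinarith⟩
        · rw [le_div_iff₀ hc] at ha
          rw [div_le_iff₀ hc] at hb
          exact ⟨by rw [hLdef]; nlinarith, by rw [hLdef]; nlinarith⟩
      rw [hΨ0, mul_zero, norm_zero]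
      norm_num
  have step1 : (∫ ξ : ℝ, ‖(A : ℂ) * S (ξ / c) * Ψ (ξ / c)‖^2 * (1+ξ^2)^β) ≤ ∫ ξ : ℝ, h ξ :=
    integral_mono_of_nonneg (ae_of_all _ fun ξ => by positivity) hInt (ae_of_all _ hbound)
  have step2 : (∫ ξ : ℝ, h ξ) = (1+L^2)^β * (A^2 * cψ^2) * (c * V) := by
    rw [hhdef, integral_indicator measurableSet_Icc, integral_Icc_eq_integral_Ioc,
      ← intervalIntegral.integral_of_le (by linarith : -L ≤ L)]
    rw [intervalIntegral.integral_const_mul]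
    rw [intervalIntegral.integral_comp_div (fun ξ => ‖S ξ‖^2) hc.ne']
    rw [show -L/c = -(3*π) by rw [hLdef]; field_simp, show L/c = 3*π by rw [hLdef]; field_simp]
    rw [smul_eq_mul, hSint]
  exact le_of_eq_of_le (by rfl) (step1.trans (le_of_eq step2))

/-- There is a constant `C > 0` depending only on `β` and `c_ψ` such that for every
Meyer-type wavelet `ψ` (Fourier transform bounded by `c_ψ` and supported in
`[−8π/3,−2π/3] ∪ [2π/3,8π/3]`), every `j ∈ ℕ`, `α ∈ ℝ` and finite `m ⊆ ℤ`, the function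
`g = α Σ_{k∈m} ψ_{jk}` satisfies `∫ |g^*(ξ)|² (1+ξ²)^β dξ ≤ C α² 2^{2jβ} |m|`. -/
theorem stmt_15 (β cψ : ℝ) (hβ : 0 < β) (hcψ : 0 < cψ) :
    ∃ C : ℝ, 0 < C ∧
      ∀ ψ : ℝ → ℝ, Integrable ψ → MemLp ψ 2 →
        (∀ ξ : ℝ, ‖∫ x : ℝ, Complex.exp (Complex.I * x * ξ) * (ψ x : ℂ)‖ ≤ cψ) →
        (∀ ξ : ℝ,
          ξ ∉ Set.Icc (-(8 * π / 3)) (-(2 * π / 3)) ∪ Set.Icc (2 * π / 3) (8 * π / 3) →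
            (∫ x : ℝ, Complex.exp (Complex.I * x * ξ) * (ψ x : ℂ)) = 0) →
        ∀ (j : ℕ) (α : ℝ) (m : Finset ℤ),
          (∫ ξ : ℝ,
              ‖∫ x : ℝ, Complex.exp (Complex.I * x * ξ) *
                  ((α * ∑ k ∈ m, (2 : ℝ) ^ ((j : ℝ) / 2) * ψ (2 ^ j * x - k) : ℝ) : ℂ)‖ ^ 2
                * (1 + ξ ^ 2) ^ β)
            ≤ C * α ^ 2 * (2 : ℝ) ^ (2 * (j : ℝ) * β) * m.card := by
  refine ⟨6*π*(10*π^2)^β*cψ^2, by positivity, ?_⟩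
  intro ψ hint hmem hbdd hsupp j α m
  have hπ := Real.pi_gt_three
  have hc : (0:ℝ) < (2:ℝ)^j := by positivity
  have hc1 : (1:ℝ) ≤ (2:ℝ)^j := one_le_pow₀ (by norm_num)
  have hrw : (fun ξ : ℝ =>
      ‖∫ x : ℝ, Complex.exp (Complex.I * x * ξ) *
          ((α * ∑ k ∈ m, (2 : ℝ) ^ ((j : ℝ) / 2) * ψ (2 ^ j * x - k) : ℝ) : ℂ)‖ ^ 2
        * (1 + ξ ^ 2) ^ β)
      = fun ξ : ℝ =>
        ‖(((α * (2:ℝ) ^ ((j:ℝ)/2) * ((2:ℝ)^j)⁻¹ : ℝ)) : ℂ) *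
            (fun η : ℝ => ∑ k ∈ m, Complex.exp (Complex.I * (k : ℂ) * (η : ℂ))) (ξ / (2:ℝ)^j) *
            (fun η : ℝ => ∫ x : ℝ, Complex.exp (Complex.I * x * ((η : ℝ) : ℂ)) * (ψ x : ℂ))
              (ξ / (2:ℝ)^j)‖ ^ 2 * (1 + ξ ^ 2) ^ β := by
    funext ξ
    rw [ft_sum ψ hint j α m ξ]
  rw [hrw]
  have hScont : Continuous (fun η : ℝ => ∑ k ∈ m, Complex.exp (Complex.I * (k : ℂ) * (η : ℂ))) := by
    apply continuous_finset_sum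
    intro k _
    exact Complex.continuous_exp.comp (by continuity)
  have key := main_bound β cψ hβ hcψ ((2:ℝ)^j) (α * (2:ℝ) ^ ((j:ℝ)/2) * ((2:ℝ)^j)⁻¹) hc
    (fun η : ℝ => ∑ k ∈ m, Complex.exp (Complex.I * (k : ℂ) * (η : ℂ)))
    (fun η : ℝ => ∫ x : ℝ, Complex.exp (Complex.I * x * ((η : ℝ) : ℂ)) * (ψ x : ℂ))
    hScont hbdd hsupp (6*π*m.card) (by positivity) (int_S m)
  refine key.trans ?_
  clear key hrw hbdd hsupp hmem hint hScont
  set A : ℝ := α * (2:ℝ) ^ ((j:ℝ)/2) * ((2:ℝ)^j)⁻¹ with hAdef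
  have hA2c : A^2 * (2:ℝ)^j = α^2 := by
    have h2 : ((2:ℝ)^((j:ℝ)/2))^2 = (2:ℝ)^j := by
      rw [← Real.rpow_natCast ((2:ℝ)^((j:ℝ)/2)) 2, ← Real.rpow_mul (by norm_num : (0:ℝ) ≤ 2)]
      rw [show (j:ℝ)/2 * ((2:ℕ):ℝ) = (j:ℝ) by push_cast; ring]
      rw [Real.rpow_natCast]
    have e : A^2 * (2:ℝ)^j
        = α^2 * (((2:ℝ)^((j:ℝ)/2))^2) * (((2:ℝ)^j)⁻¹ * ((2:ℝ)^j)⁻¹ * (2:ℝ)^j) := by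
      rw [hAdef]; ring
    rw [e, h2]
    field_simp
  have hrpow : (1+(3*π*(2:ℝ)^j)^2)^β ≤ (10*π^2)^β * (2:ℝ)^(2*(j:ℝ)*β) := by
    have hc2 : ((2:ℝ)^j)^2 = (2:ℝ)^(2*j : ℕ) := by rw [← pow_mul, mul_comm]
    have e2 : ((2:ℝ)^(2*j : ℕ) : ℝ)^β = (2:ℝ)^(2*(j:ℝ)*β) := by
      rw [← Real.rpow_natCast (2:ℝ) (2*j), ← Real.rpow_mul (by norm_num : (0:ℝ) ≤ 2)]
      push_cast
      ring_nf
    calc (1+(3*π*(2:ℝ)^j)^2)^β ≤ (10*π^2 * ((2:ℝ)^j)^2)^β := by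
          apply Real.rpow_le_rpow (by positivity) _ hβ.le
          have h9 : (9:ℝ) ≤ π^2 := by nlinarith
          have hcc : (1:ℝ) ≤ ((2:ℝ)^j)^2 := by nlinarith
          have h1 : (1:ℝ) ≤ π^2 * ((2:ℝ)^j)^2 := by nlinarith
          nlinarith [h1]
      _ = (10*π^2)^β * (((2:ℝ)^j)^2)^β := Real.mul_rpow (by positivity) (by positivity)
      _ = (10*π^2)^β * (2:ℝ)^(2*(j:ℝ)*β) := by rw [hc2, e2]
  calc (1+(3*π*(2:ℝ)^j)^2)^β * (A^2 * cψ^2) * ((2:ℝ)^j * (6*π*m.card))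
      = (6*π*cψ^2*m.card * (A^2*(2:ℝ)^j)) * (1+(3*π*(2:ℝ)^j)^2)^β := by ring
    _ = (6*π*cψ^2*m.card*α^2) * (1+(3*π*(2:ℝ)^j)^2)^β := by rw [hA2c]
    _ ≤ (6*π*cψ^2*m.card*α^2) * ((10*π^2)^β * (2:ℝ)^(2*(j:ℝ)*β)) := by
        apply mul_le_mul_of_nonneg_left hrpow (by positivity)
    _ = 6*π*(10*π^2)^β*cψ^2 * α ^ 2 * (2 : ℝ) ^ (2 * (j : ℝ) * β) * m.card := by ring
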